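/- For every m ∈ ℝ, the equilibrium e1^m = (m,0,0) of the Rabinovich system is nonlinearly (Lyapunov) stable: for every ε > 0 there exists δ > 0 such that every solution x : [0,∞) → ℝ³ of the Rabinovich system with ‖x(0) − (m,0,0)‖ < δ satisfies ‖x(t) − (m,0,0)‖ < ε for all t ≥ 0. -/

import Mathlib

open Matrix

/-- The Rabinovich vector field X(x₁,x₂,x₃) = (x₂x₃, −x₁x₃, x₁x₂). -/
def rabinovichField (x : Fin 3 → ℝ) : Fin 3 → ℝ :=
  ![x 1 * x 2, -(x 0 * x 2), x 0 * x 1]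

/-- x : [0,∞) → ℝ³ is a solution of the Rabinovich system. -/
def IsSolutionOnIci (x : ℝ → Fin 3 → ℝ) : Prop :=
  ∀ t ∈ Set.Ici (0 : ℝ), ∀ i : Fin 3,
    HasDerivWithinAt (fun s => x s i) (rabinovichField (x t) i) (Set.Ici (0 : ℝ)) t

lemma rab_cons01 (x : ℝ → Fin 3 → ℝ) (hx : IsSolutionOnIci x) {t : ℝ}
    (ht : t ∈ Set.Ici (0:ℝ)) :
    x t 0 * x t 0 + x t 1 * x t 1 = x 0 0 * x 0 0 + x 0 1 * x 0 1 := by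
  have hder : ∀ s ∈ Set.Ici (0:ℝ),
      HasDerivWithinAt (fun u => x u 0 * x u 0 + x u 1 * x u 1)
        ((fun _ => (0:ℝ)) s) (Set.Ici 0) s := by
    intro s hs
    have h0 := hx s hs 0
    have h1 := hx s hs 1
    simp only [rabinovichField, Matrix.cons_val_zero, Matrix.cons_val_one,
      Matrix.head_cons] at h0 h1
    have : HasDerivWithinAt (fun u => x u 0 * x u 0 + x u 1 * x u 1)
        (x s 1 * x s 2 * x s 0 + x s 0 * (x s 1 * x s 2) + (-(x s 0 * x s 2) * x s 1 + x s 1 * -(x s 0 * x s 2)))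
        (Set.Ici 0) s := (h0.fun_mul h0).fun_add (h1.fun_mul h1)
    convert this using 1
    ring
  have key := Convex.norm_image_sub_le_of_norm_hasDerivWithin_le (C := 0) hder
    (fun s _ => by simp) (convex_Ici (0:ℝ)) Set.self_mem_Ici ht
  simp only [zero_mul, Real.norm_eq_abs] at key
  have := abs_nonneg ((x t 0 * x t 0 + x t 1 * x t 1) - (x 0 0 * x 0 0 + x 0 1 * x 0 1))
  have habs : |(x t 0 * x t 0 + x t 1 * x t 1) - (x 0 0 * x 0 0 + x 0 1 * x 0 1)| = 0 :=
    le_antisymm key this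
  have := abs_eq_zero.mp habs
  linarith

lemma rab_cons12 (x : ℝ → Fin 3 → ℝ) (hx : IsSolutionOnIci x) {t : ℝ}
    (ht : t ∈ Set.Ici (0:ℝ)) :
    x t 1 * x t 1 + x t 2 * x t 2 = x 0 1 * x 0 1 + x 0 2 * x 0 2 := by
  have hder : ∀ s ∈ Set.Ici (0:ℝ),
      HasDerivWithinAt (fun u => x u 1 * x u 1 + x u 2 * x u 2)
        ((fun _ => (0:ℝ)) s) (Set.Ici 0) s := by
    intro s hs
    have h1 := hx s hs 1
    have h2 := hx s hs 2
    simp only [rabinovichField, Matrix.cons_val_zero, Matrix.cons_val_one,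
      Matrix.head_cons, Matrix.cons_val_two, Matrix.tail_cons] at h1 h2
    have : HasDerivWithinAt (fun u => x u 1 * x u 1 + x u 2 * x u 2)
        (-(x s 0 * x s 2) * x s 1 + x s 1 * -(x s 0 * x s 2) + (x s 0 * x s 1 * x s 2 + x s 2 * (x s 0 * x s 1)))
        (Set.Ici 0) s := (h1.fun_mul h1).fun_add (h2.fun_mul h2)
    convert this using 1
    ring
  have key := Convex.norm_image_sub_le_of_norm_hasDerivWithin_le (C := 0) hder
    (fun s _ => by simp) (convex_Ici (0:ℝ)) Set.self_mem_Ici ht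
  simp only [zero_mul, Real.norm_eq_abs] at key
  have := abs_nonneg ((x t 1 * x t 1 + x t 2 * x t 2) - (x 0 1 * x 0 1 + x 0 2 * x 0 2))
  have habs : |(x t 1 * x t 1 + x t 2 * x t 2) - (x 0 1 * x 0 1 + x 0 2 * x 0 2)| = 0 :=
    le_antisymm key this
  have := abs_eq_zero.mp habs
  linarith

lemma rab_cont0 (x : ℝ → Fin 3 → ℝ) (hx : IsSolutionOnIci x) :
    ContinuousOn (fun s => x s 0) (Set.Ici (0:ℝ)) :=
  fun t ht => (hx t ht 0).continuousWithinAt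

lemma rab_delta_exists (ε M : ℝ) (hε : 0 < ε) (hM : 0 < M) :
    ∃ δ η : ℝ, 0 < δ ∧ δ ≤ ε/2 ∧ δ ≤ M/2 ∧ 0 < η ∧
      2*M*δ + 3*δ*δ ≤ η ∧ η ≤ M*M/2 ∧ η ≤ ε*M/2 := by
  have hden : (0:ℝ) < 4*M+8 := by linarith
  set d : ℝ := min 1 (min (ε/2) (min (M/2) ((min (M*M) (ε*M)) / (4*M+8)))) with hd
  have hdpos : 0 < d := lt_min one_pos (lt_min (by linarith) (lt_min (by linarith)
    (div_pos (lt_min (by nlinarith) (by nlinarith)) hden)))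
  have hd1 : d ≤ 1 := min_le_left _ _
  have hq : d ≤ (min (M*M) (ε*M)) / (4*M+8) :=
    ((min_le_right _ _).trans (min_le_right _ _)).trans (min_le_right _ _)
  have h2 : d * (4*M+8) ≤ min (M*M) (ε*M) :=
    calc d * (4*M+8) ≤ (min (M*M) (ε*M)) / (4*M+8) * (4*M+8) :=
          mul_le_mul_of_nonneg_right hq (le_of_lt hden)
      _ = _ := div_mul_cancel₀ _ (ne_of_gt hden)
  refine ⟨d, d*(2*M+4), hdpos, (min_le_right _ _).trans (min_le_left _ _),
    ((min_le_right _ _).trans (min_le_right _ _)).trans (min_le_left _ _),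
    by positivity, by nlinarith, ?_, ?_⟩
  · have h3 := h2.trans (min_le_left _ _)
    nlinarith
  · have h3 := h2.trans (min_le_right _ _)
    nlinarith

set_option maxHeartbeats 1600000 in
/-- For every m ∈ ℝ, the equilibrium (m,0,0) of the Rabinovich system is
nonlinearly (Lyapunov) stable. -/
theorem rabinovich_e1_nonlinearly_stable (m : ℝ) :
    ∀ ε > (0 : ℝ), ∃ δ > (0 : ℝ), ∀ x : ℝ → Fin 3 → ℝ,
      IsSolutionOnIci x → ‖x 0 - ![m, 0, 0]‖ < δ →
        ∀ t ≥ (0 : ℝ), ‖x t - ![m, 0, 0]‖ < ε := by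
  intro ε hε
  by_cases hm : m = 0
  · subst hm
    refine ⟨ε/2, by linarith, ?_⟩
    intro x hx h0 t ht
    have hA0 : |x 0 0 - 0| < ε/2 := by
      have h := (norm_le_pi_norm (x 0 - ![(0:ℝ), 0, 0]) 0).trans_lt h0
      simpa using h
    have hA1 : |x 0 1 - 0| < ε/2 := by
      have h := (norm_le_pi_norm (x 0 - ![(0:ℝ), 0, 0]) 1).trans_lt h0
      simpa using h
    have hA2 : |x 0 2 - 0| < ε/2 := by
      have h := (norm_le_pi_norm (x 0 - ![(0:ℝ), 0, 0]) 2).trans_lt h0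
      simpa using h
    rw [abs_sub_lt_iff] at hA0 hA1 hA2
    obtain ⟨hA0a, hA0b⟩ := hA0
    obtain ⟨hA1a, hA1b⟩ := hA1
    obtain ⟨hA2a, hA2b⟩ := hA2
    have c01 := rab_cons01 x hx (t := t) ht
    have c12 := rab_cons12 x hx (t := t) ht
    have h1 : ∀ y : ℝ, y * y < ε * ε / 2 → |y - 0| < ε := by
      intro y hy
      rw [abs_sub_lt_iff]
      constructor <;> nlinarith [sq_nonneg (y - ε), sq_nonneg (y + ε)]
    have b0 : |x t 0 - 0| < ε := h1 _ (by nlinarith [sq_nonneg (x t 1), sq_nonneg (x t 2)])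
    have b1 : |x t 1 - 0| < ε := h1 _ (by nlinarith [sq_nonneg (x t 0), sq_nonneg (x t 2)])
    have b2 : |x t 2 - 0| < ε := h1 _ (by nlinarith [sq_nonneg (x t 0), sq_nonneg (x t 1)])
    rw [pi_norm_lt_iff hε]
    intro i
    fin_cases i
    · simpa using b0
    · simpa using b1
    · simpa using b2
  · have hM : 0 < |m| := abs_pos.mpr hm
    set M := |m| with hMdef
    have hMM : M * M = m * m := abs_mul_abs_self m
    have hmle : m ≤ M := le_abs_self m
    have hmle' : -m ≤ M := neg_le_abs m
    obtain ⟨δ, η, hδpos, hδε, hδM, hηpos, hδη, hηM2, hηε⟩ := rab_delta_exists ε M hε hM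
    refine ⟨δ, hδpos, ?_⟩
    intro x hx h0 t ht
    have hA0 : |x 0 0 - m| < δ := by
      have h := (norm_le_pi_norm (x 0 - ![m, 0, 0]) 0).trans_lt h0
      simpa using h
    have hA1 : |x 0 1 - 0| < δ := by
      have h := (norm_le_pi_norm (x 0 - ![m, 0, 0]) 1).trans_lt h0
      simpa using h
    have hA2 : |x 0 2 - 0| < δ := by
      have h := (norm_le_pi_norm (x 0 - ![m, 0, 0]) 2).trans_lt h0
      simpa using h
    have hmu : |m * (x 0 0 - m)| ≤ M * δ := by
      rw [abs_mul]
      exact mul_le_mul_of_nonneg_left (le_of_lt hA0) (abs_nonneg m)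
    rw [abs_sub_lt_iff] at hA0 hA1 hA2
    obtain ⟨hA0a, hA0b⟩ := hA0
    obtain ⟨hA1a, hA1b⟩ := hA1
    obtain ⟨hA2a, hA2b⟩ := hA2
    rw [abs_le] at hmu
    obtain ⟨hmu1, hmu2⟩ := hmu
    -- key estimate on the first coordinate squared, for any s ≥ 0
    have hsq : ∀ s ∈ Set.Ici (0:ℝ), |x s 0 * x s 0 - m * m| ≤ η := by
      intro s hs
      have c01 := rab_cons01 x hx (t := s) hs
      have c12 := rab_cons12 x hx (t := s) hs
      rw [abs_le]
      constructor
      · nlinarith [sq_nonneg (x s 1), sq_nonneg (x s 2), hA0a, hA0b, hA1a, hA1b, hA2a, hA2b]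
      · nlinarith [sq_nonneg (x s 1), sq_nonneg (x s 2), hA0a, hA0b, hA1a, hA1b, hA2a, hA2b]
    have hlb : ∀ s ∈ Set.Ici (0:ℝ), M*M/2 ≤ x s 0 * x s 0 := by
      intro s hs
      have h := (abs_le.mp (hsq s hs)).1
      nlinarith
    have hne : ∀ s ∈ Set.Ici (0:ℝ), x s 0 ≠ 0 := by
      intro s hs h
      have := hlb s hs
      rw [h] at this
      nlinarith
    have hsign0 : 0 < m * x 0 0 := by nlinarith
    have hsign : 0 < m * x t 0 := by
      by_contra h
      push_neg at h
      have hlt : m * x t 0 < 0 := lt_of_le_of_ne h (mul_ne_zero hm (hne t ht))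
      have hcont : ContinuousOn (fun s => m * x s 0) (Set.Icc 0 t) :=
        continuousOn_const.mul ((rab_cont0 x hx).mono Set.Icc_subset_Ici_self)
      have hivt := intermediate_value_Icc' ht hcont
      have h0mem : (0:ℝ) ∈ Set.Icc (m * x t 0) (m * x 0 0) := ⟨le_of_lt hlt, le_of_lt hsign0⟩
      obtain ⟨s, hsmem, hs0⟩ := hivt h0mem
      have hzero : x s 0 = 0 := by
        rcases mul_eq_zero.mp hs0 with h' | h'
        · exact absurd h' hm
        · exact h'
      exact hne s (Set.mem_of_mem_of_subset hsmem Set.Icc_subset_Ici_self) hzero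
    -- conclude
    have c01 := rab_cons01 x hx (t := t) ht
    have c12 := rab_cons12 x hx (t := t) ht
    have h23 : ∀ y : ℝ, y * y < δ * δ * 2 → |y - 0| < ε := by
      intro y hy
      rw [abs_sub_lt_iff]
      constructor <;> nlinarith [sq_nonneg (y - ε), sq_nonneg (y + ε)]
    have b0 : |x t 0 - m| < ε := by
      have hs := hsq t ht
      have hsum : M*M ≤ (x t 0 + m)^2 := by nlinarith [sq_nonneg (x t 0)]
      have hsq2 : (x t 0 * x t 0 - m * m)^2 ≤ η^2 := by
        have h := abs_le.mp hs
        nlinarith [h.1, h.2]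
      have hkey : (x t 0 - m)^2 * (M*M) ≤ η^2 := by
        nlinarith [sq_nonneg (x t 0 - m)]
      have habs : |x t 0 - m| ≤ η / M := by
        have hd : 0 ≤ η / M := le_of_lt (div_pos hηpos hM)
        have h2 : (η/M)^2 * (M*M) = η^2 := by field_simp
        have hM2 : 0 < M*M := mul_pos hM hM
        have hu2 : (x t 0 - m)^2 ≤ (η/M)^2 := by nlinarith [hkey, h2]
        nlinarith [sq_abs (x t 0 - m), abs_nonneg (x t 0 - m),
          add_nonneg (abs_nonneg (x t 0 - m)) hd]
      have hfin : η / M ≤ ε/2 := by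
        rw [div_le_iff₀ hM]
        linarith
      linarith
    have b1 : |x t 1 - 0| < ε := by
      refine h23 _ ?_
      nlinarith [sq_nonneg (x t 2)]
    have b2 : |x t 2 - 0| < ε := by
      refine h23 _ ?_
      nlinarith [sq_nonneg (x t 1)]
    rw [pi_norm_lt_iff hε]
    intro i
    fin_cases i
    · simpa using b0
    · simpa using b1
    · simpa using b2
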